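/- Let α, β : ℝ → ℝ be differentiable and define Y(t) = cos α(t) + sin α(t) · (cos β(t) · e2 + sin β(t) · e3). Then Y'(t)·Y(t)* = ω1(t) e1 + ω2(t) e2 + ω3(t) e3 where ω1 = β' · sin²α, ω2 = α'·cos β − β'·sin α·cos α·sin β, and ω3 = α'·sin β + β'·sin α·cos α·cos β; equivalently, as complex numbers, ω2 − i ω3 = exp(−i β)·(α' − i β'·sin α·cos α). -/

import Mathlib

open Quaternion Set

/-- The imaginary quaternion unit `i`. -/
noncomputable def e1 : ℍ[ℝ] := ⟨0, 1, 0, 0⟩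
/-- The imaginary quaternion unit `j`. -/
noncomputable def e2 : ℍ[ℝ] := ⟨0, 0, 1, 0⟩
/-- The imaginary quaternion unit `k`. -/
noncomputable def e3 : ℍ[ℝ] := ⟨0, 0, 0, 1⟩

/-- `qexp φ = exp (φ e1) = cos φ + (sin φ) e1`. -/
noncomputable def qexp (φ : ℝ) : ℍ[ℝ] :=
  (Real.cos φ : ℍ[ℝ]) + (Real.sin φ : ℍ[ℝ]) * e1

theorem stmt_10
    (α β α' β' : ℝ → ℝ)
    (hα : ∀ t, HasDerivAt α (α' t) t)
    (hβ : ∀ t, HasDerivAt β (β' t) t)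
    (Y : ℝ → ℍ[ℝ])
    (hYdef : ∀ t, Y t =
      ((Real.cos (α t) : ℝ) : ℍ[ℝ]) +
        ((Real.sin (α t) : ℝ) : ℍ[ℝ]) *
          (((Real.cos (β t) : ℝ) : ℍ[ℝ]) * e2 + ((Real.sin (β t) : ℝ) : ℍ[ℝ]) * e3)) :
    ∀ t : ℝ,
      deriv Y t * star (Y t) =
        (((β' t * Real.sin (α t) ^ 2 : ℝ)) : ℍ[ℝ]) * e1 +
        (((α' t * Real.cos (β t) - β' t * Real.sin (α t) * Real.cos (α t) * Real.sin (β t)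
          : ℝ)) : ℍ[ℝ]) * e2 +
        (((α' t * Real.sin (β t) + β' t * Real.sin (α t) * Real.cos (α t) * Real.cos (β t)
          : ℝ)) : ℍ[ℝ]) * e3 ∧
      ((α' t * Real.cos (β t) - β' t * Real.sin (α t) * Real.cos (α t) * Real.sin (β t)
          : ℝ) : ℂ) -
        Complex.I * ((α' t * Real.sin (β t) +
          β' t * Real.sin (α t) * Real.cos (α t) * Real.cos (β t) : ℝ) : ℂ) =
      Complex.exp (-(β t : ℂ) * Complex.I) *
        (((α' t : ℝ) : ℂ) -
          Complex.I * ((β' t * Real.sin (α t) * Real.cos (α t) : ℝ) : ℂ)) := by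
  intro t
  constructor
  · -- quaternion part
    have hf0 : HasDerivAt (fun s => Real.cos (α s)) (-Real.sin (α t) * α' t) t := (hα t).cos
    have hf2 : HasDerivAt (fun s => Real.sin (α s) * Real.cos (β s))
        (Real.cos (α t) * α' t * Real.cos (β t) + Real.sin (α t) * (-Real.sin (β t) * β' t)) t :=
      (hα t).sin.mul (hβ t).cos
    have hf3 : HasDerivAt (fun s => Real.sin (α s) * Real.sin (β s))
        (Real.cos (α t) * α' t * Real.sin (β t) + Real.sin (α t) * (Real.cos (β t) * β' t)) t :=
      (hα t).sin.mul (hβ t).sin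
    have hY : HasDerivAt Y
        ((-Real.sin (α t) * α' t) • (1 : ℍ[ℝ]) +
          ((Real.cos (α t) * α' t * Real.cos (β t) + Real.sin (α t) * (-Real.sin (β t) * β' t)) • e2 +
           (Real.cos (α t) * α' t * Real.sin (β t) + Real.sin (α t) * (Real.cos (β t) * β' t)) • e3)) t := by
      have h := (hf0.smul_const (1 : ℍ[ℝ])).add
        ((hf2.smul_const e2).add (hf3.smul_const e3))
      refine h.congr_of_eventuallyEq (Filter.Eventually.of_forall fun s => ?_)
      rw [hYdef s]
      simp [← Quaternion.coe_mul_eq_smul, mul_add, mul_assoc, Quaternion.coe_mul]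
    rw [hY.deriv, hYdef t]
    have hA := Real.sin_sq_add_cos_sq (α t)
    have hB := Real.sin_sq_add_cos_sq (β t)
    ext <;>
      simp only [Quaternion.re_mul, Quaternion.imI_mul, Quaternion.imJ_mul,
        Quaternion.imK_mul, Quaternion.re_add, Quaternion.imI_add, Quaternion.imJ_add,
        Quaternion.imK_add, Quaternion.re_smul, Quaternion.imI_smul, Quaternion.imJ_smul,
        Quaternion.imK_smul, Quaternion.re_star, Quaternion.imI_star, Quaternion.imJ_star,
        Quaternion.imK_star, Quaternion.re_coe, Quaternion.imI_coe, Quaternion.imJ_coe,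
        Quaternion.imK_coe, smul_eq_mul, Quaternion.re_one, Quaternion.imI_one,
        Quaternion.imJ_one, Quaternion.imK_one] <;> simp only [e1, e2, e3] <;>
      first
        | linear_combination (Real.sin (α t) * Real.cos (α t) * α' t) * hB
        | linear_combination (β' t * Real.sin (α t) ^ 2) * hB
        | linear_combination (α' t * Real.cos (β t)) * hA
        | linear_combination (α' t * Real.sin (β t)) * hA
  · rw [Complex.exp_mul_I, Complex.cos_neg, Complex.sin_neg]
    have hI : Complex.I ^ 2 = -1 := Complex.I_sq
    push_cast
    linear_combination (-(β' t : ℂ) * Complex.sin (α t) * Complex.cos (α t) * Complex.sin (β t)) * hI
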